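/- (Backward wedge growth estimate) Let Φ = {f_t} be a volume-preserving Anosov flow on a closed n-manifold with hyperbolicity constants c > 0, 0 < μ₋ ≤ μ₊ < 1 < λ₋ ≤ λ₊, strong stable bundle E^{ss} of dimension n_s and strong unstable bundle E^{uu} of dimension n_u. Then, with respect to a continuous Riemannian metric in which X, E^{ss}, E^{uu} are mutually orthogonal and X is unit, there are constants L ≥ 1 and b ≥ 1 such that ‖Tf_{-t}(v ∧ w)‖' ≤ L(bc)^{n-3}(μ₊^{n_s-1}λ₊^{n_u-1})^t ‖v ∧ w‖' for all v ∈ E^{ss}, w ∈ E^{uu}, and t ≥ 0. -/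

import Mathlib

open scoped RealInnerProductSpace

/-- The (unsigned) area `‖v ∧ w‖` of the parallelogram spanned by `v` and `w` in an
inner product space, via the Gram determinant. -/
noncomputable def wedgeNorm {E : Type*} [NormedAddCommGroup E]
    [InnerProductSpace ℝ E] (v w : E) : ℝ :=
  Real.sqrt (‖v‖ ^ 2 * ‖w‖ ^ 2 - ⟪v, w⟫ ^ 2)

lemma wedgeNorm_of_inner_eq_zero {E : Type*} [NormedAddCommGroup E]
    [InnerProductSpace ℝ E] {v w : E} (h : ⟪v, w⟫ = 0) :
    wedgeNorm v w = ‖v‖ * ‖w‖ := by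
  rw [wedgeNorm, h]
  rw [show ‖v‖ ^ 2 * ‖w‖ ^ 2 - (0:ℝ) ^ 2 = (‖v‖ * ‖w‖) ^ 2 by ring]
  exact Real.sqrt_sq (by positivity)

lemma wedgeNorm_zero_left {E : Type*} [NormedAddCommGroup E]
    [InnerProductSpace ℝ E] (w : E) : wedgeNorm 0 w = 0 := by
  simp [wedgeNorm]

lemma wedgeNorm_zero_right {E : Type*} [NormedAddCommGroup E]
    [InnerProductSpace ℝ E] (v : E) : wedgeNorm v 0 = 0 := by
  simp [wedgeNorm]

/-- An orthonormal basis of a finite-dimensional space with a prescribed first vector. -/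
lemma onb_with_first {F : Type*} [NormedAddCommGroup F] [InnerProductSpace ℝ F]
    [FiniteDimensional ℝ F] {k : ℕ} (hk : Module.finrank ℝ F = k) (hk1 : 0 < k)
    (x : F) (hx : ‖x‖ = 1) :
    ∃ b : OrthonormalBasis (Fin k) ℝ F, b ⟨0, hk1⟩ = x := by
  classical
  have hcard : Module.finrank ℝ F = Fintype.card (Fin k) := by simpa using hk
  have horth : Orthonormal ℝ (Set.restrict {(⟨0, hk1⟩ : Fin k)} (fun _ => x)) := by
    rw [orthonormal_iff_ite]
    rintro ⟨i, hi⟩ ⟨j, hj⟩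
    simp only [Set.mem_singleton_iff] at hi hj
    subst hi; subst hj
    simp [Set.restrict, real_inner_self_eq_norm_mul_norm, hx]
  obtain ⟨b, hb⟩ := horth.exists_orthonormalBasis_extension_of_card_eq hcard
  exact ⟨b, hb _ rfl⟩

/-- Hadamard's inequality for a top alternating form normalized on orthonormal bases. -/
lemma abs_alternating_le_prod_norm {E : Type*} [NormedAddCommGroup E]
    [InnerProductSpace ℝ E] [FiniteDimensional ℝ E]
    {n : ℕ} (hn : Module.finrank ℝ E = n)
    (ω : AlternatingMap ℝ E ℝ (Fin n))
    (hω : ∀ v : Fin n → E, Orthonormal ℝ v → |ω v| = 1) :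
    ∀ x : Fin n → E, |ω x| ≤ ∏ i, ‖x i‖ := by
  haveI : Fact (Module.finrank ℝ E = n) := ⟨hn⟩
  set B : OrthonormalBasis (Fin n) ℝ E := (stdOrthonormalBasis ℝ E).reindex (finCongr hn)
    with hB
  have hωB : |ω ⇑B| = 1 := hω _ B.orthonormal
  intro x
  have hrep := ω.eq_smul_basis_det B.toBasis
  have h1 : |ω x| = |ω ⇑B.toBasis| * |B.toBasis.det x| := by
    conv_lhs => rw [hrep]
    simp [abs_mul]
  rw [h1]
  have h2 : |ω ⇑B.toBasis| = 1 := by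
    rw [show ⇑B.toBasis = ⇑B by simp]
    exact hωB
  rw [h2, one_mul]
  have h3 := (B.toBasis.orientation).volumeForm_robust' B x
  rw [← h3]
  exact Orientation.abs_volumeForm_apply_le _ x

/-- Orthonormality of the assembled family `(y's, z's, x)`. -/
lemma orthonormal_snoc_append {E : Type*} [NormedAddCommGroup E] [InnerProductSpace ℝ E]
    {ns nu : ℕ} (y : Fin ns → E) (z : Fin nu → E) (x : E)
    (hyy : ∀ i j, ⟪y i, y j⟫ = if i = j then 1 else 0)
    (hzz : ∀ i j, ⟪z i, z j⟫ = if i = j then 1 else 0)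
    (hyz : ∀ i j, ⟪y i, z j⟫ = 0)
    (hxy : ∀ i, ⟪x, y i⟫ = 0) (hxz : ∀ i, ⟪x, z i⟫ = 0)
    (hx : ⟪x, x⟫ = 1) :
    Orthonormal ℝ (Fin.snoc (Fin.append y z) x : Fin (ns + nu + 1) → E) := by
  classical
  rw [orthonormal_iff_ite]
  have hA : ∀ i j : Fin (ns + nu), ⟪Fin.append y z i, Fin.append y z j⟫
      = if i = j then 1 else 0 := by
    intro i j
    induction i using Fin.addCases with
    | left i =>
      induction j using Fin.addCases with
      | left j =>
        rw [Fin.append_left, Fin.append_left, hyy]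
        congr 1
        rw [eq_iff_iff]
        constructor
        · rintro rfl; rfl
        · intro h
          have := congrArg Fin.val h
          simp only [Fin.coe_castAdd] at this
          exact Fin.ext this
      | right j =>
        rw [Fin.append_left, Fin.append_right, hyz, if_neg]
        intro h
        have := congrArg Fin.val h
        simp at this
        omega
    | right i =>
      induction j using Fin.addCases with
      | left j =>
        rw [Fin.append_right, Fin.append_left, real_inner_comm, hyz, if_neg]
        intro h
        have := congrArg Fin.val h
        simp at this
        omega
      | right j =>
        rw [Fin.append_right, Fin.append_right, hzz]
        congr 1
        rw [eq_iff_iff]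
        constructor
        · rintro rfl; rfl
        · intro h
          have := congrArg Fin.val h
          simp only [Fin.coe_natAdd] at this
          exact Fin.ext (by omega)
  have hAX : ∀ i : Fin (ns + nu), ⟪x, Fin.append y z i⟫ = 0 := by
    intro i
    induction i using Fin.addCases with
    | left i => rw [Fin.append_left]; exact hxy i
    | right i => rw [Fin.append_right]; exact hxz i
  intro i j
  induction i using Fin.lastCases with
  | last =>
    induction j using Fin.lastCases with
    | last => simpa using hx
    | cast j =>
      rw [Fin.snoc_last, Fin.snoc_castSucc, hAX, if_neg]
      exact fun h => (Fin.castSucc_lt_last j).ne' h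
  | cast i =>
    induction j using Fin.lastCases with
    | last =>
      rw [Fin.snoc_last, Fin.snoc_castSucc, real_inner_comm, hAX, if_neg]
      exact fun h => (Fin.castSucc_lt_last i).ne h
    | cast j =>
      rw [Fin.snoc_castSucc, Fin.snoc_castSucc, hA]
      congr 1
      rw [eq_iff_iff, Fin.castSucc_inj]

/-- Backward wedge growth estimate for a volume-preserving Anosov flow: with respect to
a metric making `X, E^{ss}, E^{uu}` orthogonal with `X` unit (the inner product on `E`),
there are constants `L ≥ 1` and `b ≥ 1` such that
`‖Tf_{-t}(v ∧ w)‖' ≤ L (bc)^{n-3} (μ₊^{n_s-1} λ₊^{n_u-1})^t ‖v ∧ w‖'`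
for all `v ∈ E^{ss}`, `w ∈ E^{uu}` and `t ≥ 0`. The original Anosov metric is encoded
by the norm function `N` (comparable to `‖·‖` with constants `b₋, b₊`), the preserved
volume form is `Ω`, and `ω` is the Riemannian volume form of the new metric,
`ω = φ·Ω` with `φ` continuous, positive and pinched between `m` and `M`. -/
theorem backward_wedge_growth_estimate {E : Type*} [NormedAddCommGroup E]
    [InnerProductSpace ℝ E] [FiniteDimensional ℝ E]
    {n ns nu : ℕ} (hn : Module.finrank ℝ E = n) (hsum : n = ns + nu + 1)
    (hns : 1 ≤ ns) (hnu : 1 ≤ nu)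
    -- the flow and its generator
    (f : ℝ → E → E) (hf0 : ∀ p, f 0 p = p)
    (hgroup : ∀ s t p, f (s + t) p = f s (f t p))
    (hdiff : ∀ t, Differentiable ℝ (f t))
    (X : E → E) (hX : ∀ p, ‖X p‖ = 1)
    (hXgen : ∀ t p, fderiv ℝ (f t) p (X p) = X (f t p))
    -- the invariant splitting TM = E^c ⊕ E^{ss} ⊕ E^{uu}, orthogonal for ⟪·,·⟫
    (Ess Euu : E → Submodule ℝ E)
    (hdims : ∀ p, Module.finrank ℝ (Ess p) = ns ∧ Module.finrank ℝ (Euu p) = nu)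
    (horth : ∀ p, (∀ v ∈ Ess p, ⟪X p, v⟫ = 0) ∧ (∀ w ∈ Euu p, ⟪X p, w⟫ = 0) ∧
      ∀ v ∈ Ess p, ∀ w ∈ Euu p, ⟪v, w⟫ = 0)
    (hspan : ∀ p, (Submodule.span ℝ {X p} ⊔ Ess p ⊔ Euu p) = ⊤)
    (hinv : ∀ t p, (∀ v ∈ Ess p, fderiv ℝ (f t) p v ∈ Ess (f t p)) ∧
      ∀ w ∈ Euu p, fderiv ℝ (f t) p w ∈ Euu (f t p))
    -- the original Anosov metric `N` and the hyperbolicity constants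
    (N : E → E → ℝ) (bm bp : ℝ) (hbm : 0 < bm) (hbp : bm ≤ bp)
    (hcmp : ∀ p v, bm * ‖v‖ ≤ N p v ∧ N p v ≤ bp * ‖v‖)
    (c μm μp lm lp : ℝ) (hc : 0 < c)
    (hμm : 0 < μm) (hμmp : μm ≤ μp) (hμp : μp < 1)
    (hlm : 1 < lm) (hlmp : lm ≤ lp)
    (hratess : ∀ p t, 0 ≤ t → ∀ v ∈ Ess p,
      (1 / c) * μm ^ t * N p v ≤ N (f t p) (fderiv ℝ (f t) p v) ∧
        N (f t p) (fderiv ℝ (f t) p v) ≤ c * μp ^ t * N p v)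
    (hrateuu : ∀ p t, 0 ≤ t → ∀ w ∈ Euu p,
      (1 / c) * lm ^ t * N p w ≤ N (f t p) (fderiv ℝ (f t) p w) ∧
        N (f t p) (fderiv ℝ (f t) p w) ≤ c * lp ^ t * N p w)
    -- the preserved volume form `Ω` and the metric volume form `ω = φ·Ω`
    (Ω : E → AlternatingMap ℝ E ℝ (Fin n))
    (hpres : ∀ t p (v : Fin n → E),
      Ω (f t p) (fun i => fderiv ℝ (f t) p (v i)) = Ω p v)
    (ω : AlternatingMap ℝ E ℝ (Fin n))
    (hω : ∀ v : Fin n → E, Orthonormal ℝ v → |ω v| = 1)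
    (φ : E → ℝ) (hφpos : ∀ p, 0 < φ p) (hφc : Continuous φ)
    (hφeq : ∀ p (v : Fin n → E), ω v = φ p * Ω p v)
    (m M : ℝ) (hm : 0 < m) (hφbd : ∀ p, m ≤ φ p ∧ φ p ≤ M) :
    ∃ L : ℝ, 1 ≤ L ∧ ∃ b : ℝ, 1 ≤ b ∧
      ∀ t, 0 ≤ t → ∀ p, ∀ v ∈ Ess p, ∀ w ∈ Euu p,
        wedgeNorm (fderiv ℝ (f (-t)) p v) (fderiv ℝ (f (-t)) p w)
          ≤ L * (b * c) ^ (n - 3) * (μp ^ (ns - 1) * lp ^ (nu - 1)) ^ t *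
            wedgeNorm v w := by
  classical
  subst hsum
  have hmM : m ≤ M := le_trans (hφbd 0).1 (hφbd 0).2
  have hM : 0 < M := lt_of_lt_of_le hm hmM
  have hμp0 : 0 < μp := lt_of_lt_of_le hμm hμmp
  have hbp0 : 0 < bp := lt_of_lt_of_le hbm hbp
  have hlp0 : 0 < lp := lt_trans one_pos (lt_of_lt_of_le hlm hlmp)
  have hada := abs_alternating_le_prod_norm hn ω hω
  refine ⟨M / m, (one_le_div hm).2 hmM, bp / bm, (one_le_div hbm).2 hbp, ?_⟩
  intro t ht p v hv w hw
  by_cases hv0 : v = 0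
  · simp [hv0, wedgeNorm_zero_left]
  by_cases hw0 : w = 0
  · simp [hw0, wedgeNorm_zero_right]
  set q := f (-t) p with hqdef
  -- basic flow identities
  have hftq : f t q = p := by
    calc f t q = f (t + -t) p := (hgroup t (-t) p).symm
    _ = f 0 p := by norm_num
    _ = p := hf0 p
  have hTD : ∀ x : E, fderiv ℝ (f t) q (fderiv ℝ (f (-t)) p x) = x := by
    have hcompfun : (f t) ∘ (f (-t)) = id := by
      funext y
      show f t (f (-t) y) = y
      calc f t (f (-t) y) = f (t + -t) y := (hgroup t (-t) y).symm
      _ = f 0 y := by norm_num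
      _ = y := hf0 y
    have hder : fderiv ℝ ((f t) ∘ (f (-t))) p
        = (fderiv ℝ (f t) q).comp (fderiv ℝ (f (-t)) p) :=
      fderiv_comp p (hdiff t _) (hdiff (-t) p)
    rw [hcompfun, fderiv_id] at hder
    intro x
    have := congrArg (fun (T : E →L[ℝ] E) => T x) hder
    simpa using this.symm
  set u := fderiv ℝ (f (-t)) p v with hudef
  set u' := fderiv ℝ (f (-t)) p w with hu'def
  have humem : u ∈ Ess q := (hinv (-t) p).1 v hv
  have hu'mem : u' ∈ Euu q := (hinv (-t) p).2 w hw
  have hTu : fderiv ℝ (f t) q u = v := hTD v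
  have hTu' : fderiv ℝ (f t) q u' = w := hTD w
  have hu0 : u ≠ 0 := fun h => hv0 (by rw [← hTu, h, map_zero])
  have hu'0 : u' ≠ 0 := fun h => hw0 (by rw [← hTu', h, map_zero])
  have hun : 0 < ‖u‖ := norm_pos_iff.2 hu0
  have hu'n : 0 < ‖u'‖ := norm_pos_iff.2 hu'0
  have hvn : 0 < ‖v‖ := norm_pos_iff.2 hv0
  have hwn : 0 < ‖w‖ := norm_pos_iff.2 hw0
  -- orthonormal bases of the stable and unstable spaces at q
  have hx1 : ‖u‖⁻¹ • u ∈ Ess q := Submodule.smul_mem _ _ humem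
  have hx1' : ‖u'‖⁻¹ • u' ∈ Euu q := Submodule.smul_mem _ _ hu'mem
  obtain ⟨bs, hbs0⟩ := onb_with_first (hdims q).1 hns (⟨‖u‖⁻¹ • u, hx1⟩ : Ess q)
    (by
      show ‖‖u‖⁻¹ • u‖ = 1
      exact norm_smul_inv_norm hu0)
  obtain ⟨bu, hbu0⟩ := onb_with_first (hdims q).2 hnu (⟨‖u'‖⁻¹ • u', hx1'⟩ : Euu q)
    (by
      show ‖‖u'‖⁻¹ • u'‖ = 1
      exact norm_smul_inv_norm hu'0)
  set y : Fin ns → E := fun k => ((bs k : Ess q) : E) with hydef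
  set z : Fin nu → E := fun l => ((bu l : Euu q) : E) with hzdef
  have hy_mem : ∀ k, y k ∈ Ess q := fun k => (bs k).2
  have hz_mem : ∀ l, z l ∈ Euu q := fun l => (bu l).2
  have hy0 : y ⟨0, hns⟩ = ‖u‖⁻¹ • u := by rw [hydef]; exact congrArg _ hbs0
  have hz0 : z ⟨0, hnu⟩ = ‖u'‖⁻¹ • u' := by rw [hzdef]; exact congrArg _ hbu0
  have hyn : ∀ k, ‖y k‖ = 1 := fun k => bs.orthonormal.1 k
  have hzn : ∀ l, ‖z l‖ = 1 := fun l => bu.orthonormal.1 l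
  -- the assembled orthonormal family at q
  set g : Fin (ns + nu + 1) → E := Fin.snoc (Fin.append y z) (X q) with hgdef
  have hg_on : Orthonormal ℝ g := by
    apply orthonormal_snoc_append
    · intro i j
      have := orthonormal_iff_ite.mp bs.orthonormal i j
      rw [Submodule.coe_inner] at this
      exact this
    · intro i j
      have := orthonormal_iff_ite.mp bu.orthonormal i j
      rw [Submodule.coe_inner] at this
      exact this
    · exact fun i j => (horth q).2.2 (y i) (hy_mem i) (z j) (hz_mem j)
    · exact fun i => (horth q).1 (y i) (hy_mem i)
    · exact fun i => (horth q).2.1 (z i) (hz_mem i)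
    · rw [real_inner_self_eq_norm_mul_norm, hX q]; norm_num
  have hωg : |ω g| = 1 := hω g hg_on
  -- the value of ω on the forward images of g
  have e2 := hpres t q g
  rw [hftq] at e2
  have habs : |ω (fun i => fderiv ℝ (f t) q (g i))| = φ p / φ q := by
    have e1 : ω (fun i => fderiv ℝ (f t) q (g i))
        = φ p * Ω p (fun i => fderiv ℝ (f t) q (g i)) := hφeq p _
    have e3 : ω g = φ q * Ω q g := hφeq q g
    have e4 : |Ω q g| = 1 / φ q := by
      have h5 : |ω g| = φ q * |Ω q g| := by
        rw [e3, abs_mul, abs_of_pos (hφpos q)]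
      rw [hωg] at h5
      rw [eq_div_iff (ne_of_gt (hφpos q))]
      linarith [h5]
    rw [e1, e2, abs_mul, abs_of_pos (hφpos p), e4]
    ring
  -- the two norm bounds
  have hμpt : (0:ℝ) < μp ^ t := Real.rpow_pos_of_pos hμp0 t
  have hlpt : (0:ℝ) < lp ^ t := Real.rpow_pos_of_pos hlp0 t
  have hsb : ∀ x ∈ Ess q, ‖fderiv ℝ (f t) q x‖ ≤ (bp / bm * c * μp ^ t) * ‖x‖ := by
    intro x hx
    have h1 := (hcmp (f t q) (fderiv ℝ (f t) q x)).1
    have h2 := (hratess q t ht x hx).2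
    have h3 := (hcmp q x).2
    have h4 : c * μp ^ t * N q x ≤ c * μp ^ t * (bp * ‖x‖) :=
      mul_le_mul_of_nonneg_left h3 (by positivity)
    have key : bm * ‖fderiv ℝ (f t) q x‖ ≤ bm * ((bp / bm * c * μp ^ t) * ‖x‖) := by
      have : bm * ((bp / bm * c * μp ^ t) * ‖x‖) = c * μp ^ t * (bp * ‖x‖) := by
        field_simp
      rw [this]
      linarith
    exact le_of_mul_le_mul_left key hbm
  have hub : ∀ x ∈ Euu q, ‖fderiv ℝ (f t) q x‖ ≤ (bp / bm * c * lp ^ t) * ‖x‖ := by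
    intro x hx
    have h1 := (hcmp (f t q) (fderiv ℝ (f t) q x)).1
    have h2 := (hrateuu q t ht x hx).2
    have h3 := (hcmp q x).2
    have h4 : c * lp ^ t * N q x ≤ c * lp ^ t * (bp * ‖x‖) :=
      mul_le_mul_of_nonneg_left h3 (by positivity)
    have key : bm * ‖fderiv ℝ (f t) q x‖ ≤ bm * ((bp / bm * c * lp ^ t) * ‖x‖) := by
      have : bm * ((bp / bm * c * lp ^ t) * ‖x‖) = c * lp ^ t * (bp * ‖x‖) := by
        field_simp
      rw [this]
      linarith
    exact le_of_mul_le_mul_left key hbm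
  -- product of norms of the images
  have hXim : fderiv ℝ (f t) q (X q) = X p := by rw [hXgen t q, hftq]
  have hprod : ∏ i, ‖fderiv ℝ (f t) q (g i)‖
      = ((∏ k : Fin ns, ‖fderiv ℝ (f t) q (y k)‖)
        * ∏ l : Fin nu, ‖fderiv ℝ (f t) q (z l)‖) * 1 := by
    rw [Fin.prod_univ_castSucc, Fin.prod_univ_add]
    congr 1
    · congr 1
      · exact Finset.prod_congr rfl fun k _ => by
          rw [hgdef, Fin.snoc_castSucc, Fin.append_left]
      · exact Finset.prod_congr rfl fun l _ => by
          rw [hgdef, Fin.snoc_castSucc, Fin.append_right]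
    · rw [hgdef, Fin.snoc_last, hXim, hX p]
  have hSle : ∏ k : Fin ns, ‖fderiv ℝ (f t) q (y k)‖
      ≤ (‖u‖⁻¹ * ‖v‖) * (bp / bm * c * μp ^ t) ^ (ns - 1) := by
    rw [← Finset.mul_prod_erase Finset.univ _ (Finset.mem_univ (⟨0, hns⟩ : Fin ns))]
    have hfirst : ‖fderiv ℝ (f t) q (y ⟨0, hns⟩)‖ = ‖u‖⁻¹ * ‖v‖ := by
      rw [hy0, map_smul, hTu, norm_smul]
      simp
    rw [hfirst]
    apply mul_le_mul_of_nonneg_left ?_ (by positivity)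
    calc ∏ k ∈ Finset.univ.erase (⟨0, hns⟩ : Fin ns), ‖fderiv ℝ (f t) q (y k)‖
        ≤ ∏ _k ∈ Finset.univ.erase (⟨0, hns⟩ : Fin ns), (bp / bm * c * μp ^ t) :=
          Finset.prod_le_prod (fun k _ => norm_nonneg _) (fun k _ => by
            have := hsb (y k) (hy_mem k)
            rwa [hyn k, mul_one] at this)
      _ = (bp / bm * c * μp ^ t) ^ (ns - 1) := by
          rw [Finset.prod_const, Finset.card_erase_of_mem (Finset.mem_univ _),
            Finset.card_univ, Fintype.card_fin]
  have hUle : ∏ l : Fin nu, ‖fderiv ℝ (f t) q (z l)‖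
      ≤ (‖u'‖⁻¹ * ‖w‖) * (bp / bm * c * lp ^ t) ^ (nu - 1) := by
    rw [← Finset.mul_prod_erase Finset.univ _ (Finset.mem_univ (⟨0, hnu⟩ : Fin nu))]
    have hfirst : ‖fderiv ℝ (f t) q (z ⟨0, hnu⟩)‖ = ‖u'‖⁻¹ * ‖w‖ := by
      rw [hz0, map_smul, hTu', norm_smul]
      simp
    rw [hfirst]
    apply mul_le_mul_of_nonneg_left ?_ (by positivity)
    calc ∏ l ∈ Finset.univ.erase (⟨0, hnu⟩ : Fin nu), ‖fderiv ℝ (f t) q (z l)‖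
        ≤ ∏ _l ∈ Finset.univ.erase (⟨0, hnu⟩ : Fin nu), (bp / bm * c * lp ^ t) :=
          Finset.prod_le_prod (fun l _ => norm_nonneg _) (fun l _ => by
            have := hub (z l) (hz_mem l)
            rwa [hzn l, mul_one] at this)
      _ = (bp / bm * c * lp ^ t) ^ (nu - 1) := by
          rw [Finset.prod_const, Finset.card_erase_of_mem (Finset.mem_univ _),
            Finset.card_univ, Fintype.card_fin]
  -- the main chain of inequalities
  have hmain : m / M ≤ ((‖u‖⁻¹ * ‖v‖) * (bp / bm * c * μp ^ t) ^ (ns - 1))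
      * ((‖u'‖⁻¹ * ‖w‖) * (bp / bm * c * lp ^ t) ^ (nu - 1)) := by
    calc m / M ≤ φ p / φ q :=
          div_le_div₀ (hφpos p).le (hφbd p).1 (hφpos q) (hφbd q).2
      _ = |ω (fun i => fderiv ℝ (f t) q (g i))| := habs.symm
      _ ≤ ∏ i, ‖fderiv ℝ (f t) q (g i)‖ := hada _
      _ = ((∏ k : Fin ns, ‖fderiv ℝ (f t) q (y k)‖)
          * ∏ l : Fin nu, ‖fderiv ℝ (f t) q (z l)‖) * 1 := hprod
      _ ≤ ((‖u‖⁻¹ * ‖v‖) * (bp / bm * c * μp ^ t) ^ (ns - 1))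
          * ((‖u'‖⁻¹ * ‖w‖) * (bp / bm * c * lp ^ t) ^ (nu - 1)) := by
          rw [mul_one]
          exact mul_le_mul hSle hUle
            (Finset.prod_nonneg fun l _ => norm_nonneg _) (by positivity)
  -- rearrange
  rw [wedgeNorm_of_inner_eq_zero ((horth q).2.2 u humem u' hu'mem),
    wedgeNorm_of_inner_eq_zero ((horth p).2.2 v hv w hw)]
  have hfin : ‖u‖ * ‖u'‖ ≤ (M / m) * ((bp / bm * c * μp ^ t) ^ (ns - 1)
      * (bp / bm * c * lp ^ t) ^ (nu - 1)) * (‖v‖ * ‖w‖) := by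
    have h1 : (m / M) * (‖u‖ * ‖u'‖)
        ≤ (((‖u‖⁻¹ * ‖v‖) * (bp / bm * c * μp ^ t) ^ (ns - 1))
          * ((‖u'‖⁻¹ * ‖w‖) * (bp / bm * c * lp ^ t) ^ (nu - 1))) * (‖u‖ * ‖u'‖) :=
      mul_le_mul_of_nonneg_right hmain (by positivity)
    have h2 : (((‖u‖⁻¹ * ‖v‖) * (bp / bm * c * μp ^ t) ^ (ns - 1))
          * ((‖u'‖⁻¹ * ‖w‖) * (bp / bm * c * lp ^ t) ^ (nu - 1))) * (‖u‖ * ‖u'‖)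
        = ((bp / bm * c * μp ^ t) ^ (ns - 1) * (bp / bm * c * lp ^ t) ^ (nu - 1))
          * (‖v‖ * ‖w‖) := by
      field_simp
    rw [h2] at h1
    calc ‖u‖ * ‖u'‖ = (M / m) * ((m / M) * (‖u‖ * ‖u'‖)) := by field_simp
      _ ≤ (M / m) * (((bp / bm * c * μp ^ t) ^ (ns - 1)
          * (bp / bm * c * lp ^ t) ^ (nu - 1)) * (‖v‖ * ‖w‖)) :=
        mul_le_mul_of_nonneg_left h1 (by positivity)
      _ = (M / m) * ((bp / bm * c * μp ^ t) ^ (ns - 1)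
          * (bp / bm * c * lp ^ t) ^ (nu - 1)) * (‖v‖ * ‖w‖) := by ring
  -- identify the constants
  have hpow : ∀ (x : ℝ), 0 < x → ∀ k : ℕ, (x ^ t) ^ k = (x ^ k) ^ t := by
    intro x hx k
    rw [← Real.rpow_natCast (x ^ t) k, ← Real.rpow_natCast x k,
      ← Real.rpow_mul hx.le, ← Real.rpow_mul hx.le, mul_comm]
  have hconst : (bp / bm * c * μp ^ t) ^ (ns - 1) * (bp / bm * c * lp ^ t) ^ (nu - 1)
      = (bp / bm * c) ^ (ns + nu + 1 - 3) * (μp ^ (ns - 1) * lp ^ (nu - 1)) ^ t := by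
    rw [mul_pow, mul_pow, Real.mul_rpow (by positivity) (by positivity),
      ← hpow μp hμp0 (ns - 1), ← hpow lp hlp0 (nu - 1),
      show ns + nu + 1 - 3 = (ns - 1) + (nu - 1) by omega, pow_add]
    ring
  rw [hconst] at hfin
  exact le_of_le_of_eq hfin (by ring)
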